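/- Let ε > 0 and J, C > 0 be constants and let (X_n)_{n≥1} be a real-valued process adapted to a filtration (F_n) with X_1 ≥ 0, |X_{n+1} − X_n| ≤ C almost surely for all n, and E[X_{n+1} − X_n | F_n] ≥ ε on the event {X_n < J·n} for all n. Then, almost surely, X_n ≥ min{J, ε}·n − √(5·C²·n·log n) for all sufficiently large n; in particular, almost surely liminf_{n→∞} X_n/n ≥ min{J, ε} > 0. -/

import Mathlib

open MeasureTheory Filter

namespace PDrift
set_option linter.unusedSectionVars false
set_option linter.unusedVariables false

/-- Elementary inequality: `exp u ≤ 1 + u + u²/2 · exp |u|`. -/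
lemma exp_le_quadratic (u : ℝ) : Real.exp u ≤ 1 + u + u ^ 2 / 2 * Real.exp |u| := by
  rcases le_or_gt u 0 with hu | hu
  · have h1 : Real.exp u ≤ 1 + u + u ^ 2 / 2 := by
      have key : ∀ v ∈ Set.Iic (0 : ℝ), Real.exp v ≤ 1 + v + v ^ 2 / 2 := by
        have hmono : AntitoneOn (fun v : ℝ => 1 + v + v ^ 2 / 2 - Real.exp v) (Set.Iic 0) := by
          apply antitoneOn_of_deriv_nonpos (convex_Iic 0)
          · fun_prop
          · intro v _
            exact (((differentiable_const _).add differentiable_id).add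
              ((differentiable_pow 2).div_const 2)).sub Real.differentiable_exp |>.differentiableAt.differentiableWithinAt
          · intro v hv
            have hder : HasDerivAt (fun v : ℝ => 1 + v + v ^ 2 / 2 - Real.exp v)
                (0 + 1 + 2 * v / 2 - Real.exp v) v := by
              have h1 : HasDerivAt (fun v : ℝ => v ^ 2 / 2) (2 * v / 2) v := by
                simpa using ((hasDerivAt_pow 2 v).div_const 2)
              exact (((hasDerivAt_const v (1:ℝ)).add (hasDerivAt_id v)).add h1).sub
                (Real.hasDerivAt_exp v)
            rw [hder.deriv]
            have := Real.add_one_le_exp v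
            linarith
        intro v hv
        have := hmono hv (Set.self_mem_Iic) hv.out
        simp at this
        linarith
      have := key u hu
      linarith
    have h2 : (0:ℝ) ≤ u ^ 2 / 2 := by positivity
    have h3 : (1:ℝ) ≤ Real.exp |u| := Real.one_le_exp (abs_nonneg u)
    nlinarith
  · rw [abs_of_pos hu]
    have key : ∀ v ∈ Set.Ici (0 : ℝ),
        Real.exp v ≤ 1 + v + v ^ 2 / 2 * Real.exp v := by
      have hmono : MonotoneOn
          (fun v : ℝ => 1 + v + v ^ 2 / 2 * Real.exp v - Real.exp v) (Set.Ici 0) := by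
        apply monotoneOn_of_deriv_nonneg (convex_Ici 0)
        · fun_prop
        · intro v _
          exact ((((differentiable_const _).add differentiable_id).add
            (((differentiable_pow 2).div_const 2).mul Real.differentiable_exp)).sub
            Real.differentiable_exp).differentiableAt.differentiableWithinAt
        · intro v hv
          rw [interior_Ici] at hv
          have hv' : 0 < v := hv
          have hd : deriv (fun v : ℝ => 1 + v + v ^ 2 / 2 * Real.exp v - Real.exp v) v
              = 1 + (v * Real.exp v + v ^ 2 / 2 * Real.exp v) - Real.exp v := by
            have : HasDerivAt (fun v : ℝ => 1 + v + v ^ 2 / 2 * Real.exp v - Real.exp v)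
                (0 + 1 + (2 * v / 2 * Real.exp v + v ^ 2 / 2 * Real.exp v) - Real.exp v) v := by
              have h1 : HasDerivAt (fun v : ℝ => v ^ 2 / 2) (2 * v / 2) v := by
                simpa using ((hasDerivAt_pow 2 v).div_const 2)
              exact (((hasDerivAt_const v (1:ℝ)).add (hasDerivAt_id v)).add
                (h1.mul (Real.hasDerivAt_exp v))).sub (Real.hasDerivAt_exp v)
            rw [this.deriv]
            ring
          rw [hd]
          -- 1 + v e^v + v²/2 e^v - e^v ≥ 0 since (1 - v) e^v ≤ 1
          have h1 : (1 - v) * Real.exp v ≤ 1 := by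
            have := Real.add_one_le_exp (-v)
            have h2 : (1 - v) ≤ Real.exp (-v) := by linarith
            calc (1 - v) * Real.exp v ≤ Real.exp (-v) * Real.exp v :=
                  mul_le_mul_of_nonneg_right h2 (Real.exp_pos v).le
              _ = 1 := by rw [← Real.exp_add]; simp
          nlinarith [Real.exp_pos v, sq_nonneg v]
      intro v hv
      have := hmono (Set.self_mem_Ici) hv hv.out
      simp at this
      linarith
    have := key u hu.le
    linarith



variable {Ω : Type*} {m0 : MeasurableSpace Ω} (μ : Measure Ω) [IsProbabilityMeasure μ]
  (F : Filtration ℕ m0) (X : ℕ → Ω → ℝ)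

/-- increment -/
noncomputable def dd (X : ℕ → Ω → ℝ) (k : ℕ) : Ω → ℝ := fun ω => X (k + 1) ω - X k ω

/-- conditional drift -/
noncomputable def DD (μ : Measure Ω) (F : Filtration ℕ m0) (X : ℕ → Ω → ℝ) (k : ℕ) : Ω → ℝ :=
  μ[dd X k | F k]

/-- centered increment -/
noncomputable def xi (μ : Measure Ω) (F : Filtration ℕ m0) (X : ℕ → Ω → ℝ) (k : ℕ) : Ω → ℝ :=
  fun ω => dd X k ω - DD μ F X k ω

/-- partial sums of centered increments -/
noncomputable def TT (μ : Measure Ω) (F : Filtration ℕ m0) (X : ℕ → Ω → ℝ) (s n : ℕ) : Ω → ℝ :=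
  fun ω => ∑ k ∈ Finset.Ico s n, xi μ F X k ω

variable {μ F X}

lemma integrable_of_ae_bdd {f : Ω → ℝ} (hf : AEStronglyMeasurable f μ) (b : ℝ)
    (h : ∀ᵐ ω ∂μ, |f ω| ≤ b) : Integrable f μ :=
  ⟨hf, HasFiniteIntegral.of_bounded (C := b) (by simpa using h)⟩

section meas

variable (hadapt : Adapted F X)
include hadapt

lemma dd_sm (k : ℕ) : StronglyMeasurable[F (k + 1)] (dd X k) :=
  (hadapt (k + 1)).stronglyMeasurable.sub ((hadapt k).mono (F.mono k.le_succ) le_rfl).stronglyMeasurable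

lemma DD_sm (k : ℕ) : StronglyMeasurable[F k] (DD μ F X k) := stronglyMeasurable_condExp

lemma xi_sm (k : ℕ) : StronglyMeasurable[F (k + 1)] (xi μ F X k) :=
  (dd_sm hadapt k).sub ((DD_sm (μ := μ) (F := F) (X := X) hadapt k).mono (F.mono k.le_succ))

lemma xi_sm' {k n : ℕ} (hk : k < n) : StronglyMeasurable[F n] (xi μ F X k) :=
  (xi_sm hadapt k).mono (F.mono hk)

lemma TT_sm (s n : ℕ) : StronglyMeasurable[F n] (TT μ F X s n) := by
  apply Finset.stronglyMeasurable_fun_sum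
  intro k hk
  exact xi_sm' hadapt (Finset.mem_Ico.1 hk).2

end meas

section bounds

variable {C : ℝ} (hC : 0 < C) (hadapt : Adapted F X)
  (hbdd : ∀ n : ℕ, 1 ≤ n → ∀ᵐ ω ∂μ, |X (n + 1) ω - X n ω| ≤ C)

include hC hadapt hbdd

lemma dd_int {k : ℕ} (hk : 1 ≤ k) : Integrable (dd X k) μ :=
  integrable_of_ae_bdd ((dd_sm hadapt k).mono (F.le _)).aestronglyMeasurable C (hbdd k hk)

lemma DD_ae {k : ℕ} (hk : 1 ≤ k) : ∀ᵐ ω ∂μ, |DD μ F X k ω| ≤ C := by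
  have := ae_bdd_condExp_of_ae_bdd (m := F k) (μ := μ) (R := ⟨C, hC.le⟩)
    (f := dd X k) (hbdd k hk)
  exact this

lemma DD_int {k : ℕ} (hk : 1 ≤ k) : Integrable (DD μ F X k) μ := integrable_condExp

lemma xi_ae {k : ℕ} (hk : 1 ≤ k) : ∀ᵐ ω ∂μ, |xi μ F X k ω| ≤ 2 * C := by
  filter_upwards [hbdd k hk, DD_ae hC hadapt hbdd hk] with ω h1 h2
  have h1' : |dd X k ω| ≤ C := h1
  calc |xi μ F X k ω| = |dd X k ω - DD μ F X k ω| := rfl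
    _ ≤ |dd X k ω| + |DD μ F X k ω| := abs_sub _ _
    _ ≤ 2 * C := by linarith

lemma xi_int {k : ℕ} (hk : 1 ≤ k) : Integrable (xi μ F X k) μ :=
  (dd_int hC hadapt hbdd hk).sub (DD_int hC hadapt hbdd hk)

/-- conditional mean zero -/
lemma xi_condexp {k : ℕ} (hk : 1 ≤ k) : μ[xi μ F X k | F k] =ᵐ[μ] 0 := by
  have h1 : μ[xi μ F X k | F k] =ᵐ[μ] μ[dd X k | F k] - μ[DD μ F X k | F k] :=
    condExp_sub (dd_int hC hadapt hbdd hk) (DD_int hC hadapt hbdd hk) _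
  have h2 : μ[DD μ F X k | F k] = DD μ F X k :=
    condExp_of_stronglyMeasurable (F.le k) stronglyMeasurable_condExp integrable_condExp
  filter_upwards [h1] with ω e1
  simp only [Pi.sub_apply] at e1
  rw [Pi.zero_apply, e1, h2]
  exact sub_self _

/-- conditional second moment bound -/
lemma xi_sq_condexp {k : ℕ} (hk : 1 ≤ k) :
    ∀ᵐ ω ∂μ, (μ[fun ω' => (xi μ F X k ω') ^ 2 | F k]) ω ≤ C ^ 2 := by
  set d := dd X k with hd
  set D := DD μ F X k with hD
  have hdi : Integrable d μ := dd_int hC hadapt hbdd hk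
  have hDi : Integrable D μ := DD_int hC hadapt hbdd hk
  have hDsm : StronglyMeasurable[F k] D := stronglyMeasurable_condExp
  have hdm : AEStronglyMeasurable d μ := ((dd_sm hadapt k).mono (F.le _)).aestronglyMeasurable
  have hDm : AEStronglyMeasurable D μ := hDi.1
  -- integrability of pieces
  have hd2 : Integrable (fun ω => d ω * d ω) μ := by
    refine integrable_of_ae_bdd (f := fun ω => d ω * d ω) (hdm.mul hdm) (C * C) ?_
    filter_upwards [hbdd k hk] with ω h1
    have h1' : |d ω| ≤ C := h1
    rw [abs_mul]
    exact mul_le_mul h1' h1' (abs_nonneg _) hC.le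
  have hDd : Integrable (fun ω => D ω * d ω) μ := by
    refine integrable_of_ae_bdd (f := fun ω => D ω * d ω) (hDm.mul hdm) (C * C) ?_
    filter_upwards [hbdd k hk, DD_ae hC hadapt hbdd hk] with ω h1 h2
    have h1' : |d ω| ≤ C := h1
    rw [abs_mul]
    exact mul_le_mul h2 h1' (abs_nonneg _) hC.le
  have hDD : Integrable (fun ω => D ω * D ω) μ := by
    refine integrable_of_ae_bdd (f := fun ω => D ω * D ω) (hDm.mul hDm) (C * C) ?_
    filter_upwards [DD_ae hC hadapt hbdd hk] with ω h2
    rw [abs_mul]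
    exact mul_le_mul h2 h2 (abs_nonneg _) hC.le
  -- pull-out property
  have hpull : μ[fun ω => D ω * d ω | F k] =ᵐ[μ] fun ω => D ω * (μ[d | F k]) ω := by
    have := condExp_mul_of_stronglyMeasurable_left (μ := μ) hDsm hDd hdi
    simpa [Pi.mul_def] using this
  have hDDc : μ[fun ω => D ω * D ω | F k] = fun ω => D ω * D ω :=
    condExp_of_stronglyMeasurable (F.le k) (hDsm.mul hDsm) hDD
  -- expand the square
  have hexp : (fun ω => (xi μ F X k ω) ^ 2)
      = fun ω => d ω * d ω - (2:ℝ) • (D ω * d ω) + D ω * D ω := by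
    funext ω; simp only [xi, ← hd, ← hD, smul_eq_mul]; ring
  have hsum : μ[fun ω => (xi μ F X k ω) ^ 2 | F k]
      =ᵐ[μ] μ[fun ω => d ω * d ω | F k] - (2:ℝ) • μ[fun ω => D ω * d ω | F k]
        + μ[fun ω => D ω * D ω | F k] := by
    rw [hexp]
    have h1 : μ[(fun ω => d ω * d ω) - (2:ℝ) • (fun ω => D ω * d ω) | F k]
        =ᵐ[μ] μ[fun ω => d ω * d ω | F k] - μ[(2:ℝ) • fun ω => D ω * d ω | F k] :=
      condExp_sub hd2 (hDd.smul (2:ℝ)) _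
    have h2 : μ[(2:ℝ) • (fun ω => D ω * d ω) | F k]
        =ᵐ[μ] (2:ℝ) • μ[fun ω => D ω * d ω | F k] := condExp_smul _ _ _
    have h3 : μ[((fun ω => d ω * d ω) - (2:ℝ) • (fun ω => D ω * d ω))
          + (fun ω => D ω * D ω) | F k]
        =ᵐ[μ] μ[(fun ω => d ω * d ω) - (2:ℝ) • (fun ω => D ω * d ω) | F k]
          + μ[fun ω => D ω * D ω | F k] :=
      condExp_add (hd2.sub (hDd.smul (2:ℝ))) hDD _
    have heq : (fun ω => d ω * d ω - (2:ℝ) • (D ω * d ω) + D ω * D ω)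
        = ((fun ω => d ω * d ω) - (2:ℝ) • (fun ω => D ω * d ω)) + (fun ω => D ω * D ω) := by
      funext ω; simp
    rw [heq]
    filter_upwards [h1, h2, h3] with ω e1 e2 e3
    simp only [Pi.add_apply, Pi.sub_apply, Pi.smul_apply, smul_eq_mul] at *
    rw [e3, e1, e2]
  -- d² ≤ C² conditional bound
  have hmono : ∀ᵐ ω ∂μ, (μ[fun ω' => d ω' * d ω' | F k]) ω ≤ C ^ 2 := by
    have hle : (fun ω => d ω * d ω) ≤ᵐ[μ] fun _ => C ^ 2 := by
      filter_upwards [hbdd k hk] with ω h1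
      have h1' : |d ω| ≤ C := h1
      nlinarith [abs_nonneg (d ω), abs_mul_abs_self (d ω)]
    have h5 := condExp_mono (μ := μ) (m := F k) hd2 (integrable_const _) hle
    have hconst : μ[(fun _ => C ^ 2 : Ω → ℝ) | F k] = fun _ => C ^ 2 := condExp_const (F.le k) _
    rw [hconst] at h5
    exact h5
  -- conditional mean of d is D
  filter_upwards [hsum, hpull, hmono] with ω e1 e2 e4
  simp only [Pi.add_apply, Pi.sub_apply, Pi.smul_apply, smul_eq_mul] at e1
  rw [e1, e2, hDDc]
  have : (μ[d | F k]) = D := rfl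
  rw [this]
  simp only []
  nlinarith [sq_nonneg (D ω)]

/-- aggregated a.e. bound on all centered increments -/
lemma xi_ae_all : ∀ᵐ ω ∂μ, ∀ k : ℕ, 1 ≤ k → |xi μ F X k ω| ≤ 2 * C := by
  rw [ae_all_iff]
  intro k
  rcases Nat.lt_or_ge k 1 with hk | hk
  · exact Eventually.of_forall fun ω h => absurd h (by omega)
  · filter_upwards [xi_ae hC hadapt hbdd hk] with ω h _
    exact h

/-- conditional mgf bound -/
lemma condexp_mgf {k : ℕ} (hk : 1 ≤ k) {c : ℝ} (hc : 0 ≤ c) :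
    ∀ᵐ ω ∂μ, (μ[fun ω' => Real.exp (-c * xi μ F X k ω') | F k]) ω
      ≤ Real.exp (c ^ 2 * C ^ 2 * Real.exp (2 * c * C) / 2) := by
  set κ := c ^ 2 * Real.exp (2 * c * C) / 2 with hκ
  have hκ0 : 0 ≤ κ := by positivity
  set ξ := xi μ F X k with hξ
  have hξm : AEStronglyMeasurable ξ μ := (xi_int hC hadapt hbdd hk).1
  -- pointwise bound
  have hpt : ∀ᵐ ω ∂μ, Real.exp (-c * ξ ω) ≤ 1 + (-c) * ξ ω + κ * (ξ ω) ^ 2 := by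
    filter_upwards [xi_ae hC hadapt hbdd hk] with ω hb
    have h8 := exp_le_quadratic (-c * ξ ω)
    have habs : |(-c) * ξ ω| ≤ 2 * c * C := by
      rw [abs_mul, abs_neg, abs_of_nonneg hc]
      calc c * |ξ ω| ≤ c * (2 * C) := by
            exact mul_le_mul_of_nonneg_left hb hc
        _ = 2 * c * C := by ring
    have hexp : Real.exp |(-c) * ξ ω| ≤ Real.exp (2 * c * C) := Real.exp_le_exp.2 habs
    have hsq : ((-c) * ξ ω) ^ 2 = c ^ 2 * (ξ ω) ^ 2 := by ring
    have h9 : ((-c) * ξ ω) ^ 2 / 2 * Real.exp |(-c) * ξ ω| ≤ κ * (ξ ω) ^ 2 := by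
      rw [hsq, hκ]
      have h10 : c ^ 2 * (ξ ω) ^ 2 / 2 * Real.exp |(-c) * ξ ω|
          ≤ c ^ 2 * (ξ ω) ^ 2 / 2 * Real.exp (2 * c * C) := by
        apply mul_le_mul_of_nonneg_left hexp (by positivity)
      calc c ^ 2 * (ξ ω) ^ 2 / 2 * Real.exp |(-c) * ξ ω|
          ≤ c ^ 2 * (ξ ω) ^ 2 / 2 * Real.exp (2 * c * C) := h10
        _ = c ^ 2 * Real.exp (2 * c * C) / 2 * (ξ ω) ^ 2 := by ring
    linarith
  -- integrability
  have hint1 : Integrable (fun ω => Real.exp (-c * ξ ω)) μ := by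
    refine integrable_of_ae_bdd (f := fun ω => Real.exp (-c * ξ ω))
      ((Real.measurable_exp.comp_aemeasurable (hξm.aemeasurable.const_mul (-c))).aestronglyMeasurable)
      (Real.exp (2 * c * C)) ?_
    filter_upwards [xi_ae hC hadapt hbdd hk] with ω hb
    rw [abs_of_pos (Real.exp_pos _)]
    apply Real.exp_le_exp.2
    calc -c * ξ ω ≤ |(-c) * ξ ω| := le_abs_self _
      _ = c * |ξ ω| := by rw [abs_mul, abs_neg, abs_of_nonneg hc]
      _ ≤ c * (2 * C) := mul_le_mul_of_nonneg_left hb hc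
      _ = 2 * c * C := by ring
  have hξi : Integrable ξ μ := xi_int hC hadapt hbdd hk
  have hξ2i : Integrable (fun ω => (ξ ω) ^ 2) μ := by
    refine integrable_of_ae_bdd (f := fun ω => (ξ ω) ^ 2)
      ((hξm.aemeasurable.pow_const 2).aestronglyMeasurable) ((2 * C) ^ 2) ?_
    filter_upwards [xi_ae hC hadapt hbdd hk] with ω hb
    rw [abs_of_nonneg (sq_nonneg _)]
    calc (ξ ω) ^ 2 = |ξ ω| ^ 2 := (sq_abs _).symm
      _ ≤ (2 * C) ^ 2 := by
          exact pow_le_pow_left₀ (abs_nonneg _) hb 2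
  have hgi : Integrable (fun ω => 1 + (-c) * ξ ω + κ * (ξ ω) ^ 2) μ :=
    ((integrable_const 1).add (hξi.const_mul (-c))).add (hξ2i.const_mul κ)
  -- conditional expectation of the quadratic majorant
  have hg_eq : (fun ω => 1 + (-c) * ξ ω + κ * (ξ ω) ^ 2)
      = ((fun _ => (1:ℝ)) + (-c) • ξ) + κ • (fun ω => (ξ ω) ^ 2) := by
    funext ω; simp only [Pi.add_apply, Pi.smul_apply, smul_eq_mul]
  have hadd1 : μ[((fun _ => (1:ℝ)) + (-c) • ξ) + κ • (fun ω => (ξ ω) ^ 2) | F k]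
      =ᵐ[μ] μ[(fun _ => (1:ℝ)) + (-c) • ξ | F k] + μ[κ • (fun ω => (ξ ω) ^ 2) | F k] :=
    condExp_add ((integrable_const 1).add (hξi.smul (-c))) (hξ2i.smul κ) _
  have hadd2 : μ[(fun _ => (1:ℝ)) + (-c) • ξ | F k]
      =ᵐ[μ] μ[(fun _ => (1:ℝ)) | F k] + μ[(-c) • ξ | F k] :=
    condExp_add (integrable_const 1) (hξi.smul (-c)) _
  have hconst : μ[(fun _ => (1:ℝ)) | F k] = fun _ => (1:ℝ) := condExp_const (F.le k) _
  have hsmul1 : μ[(-c) • ξ | F k] =ᵐ[μ] (-c) • μ[ξ | F k] := condExp_smul _ _ _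
  have hsmul2 : μ[κ • (fun ω => (ξ ω) ^ 2) | F k] =ᵐ[μ] κ • μ[(fun ω => (ξ ω) ^ 2) | F k] :=
    condExp_smul _ _ _
  have hmono := condExp_mono (μ := μ) (m := F k) hint1 hgi hpt
  filter_upwards [hmono, hadd1, hadd2, hsmul1, hsmul2, xi_condexp hC hadapt hbdd hk,
    xi_sq_condexp hC hadapt hbdd hk] with ω e0 e1 e2 e4 e5 e6 e7
  rw [hg_eq] at e0
  have : (μ[((fun _ => (1:ℝ)) + (-c) • ξ) + κ • (fun ω => (ξ ω) ^ 2) | F k]) ω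
      ≤ 1 + κ * C ^ 2 := by
    rw [e1]
    simp only [Pi.add_apply, Pi.smul_apply, smul_eq_mul] at *
    rw [e2]
    simp only [Pi.add_apply, Pi.smul_apply, smul_eq_mul, hconst]
    rw [e4, e5, e6]
    simp only [Pi.zero_apply, mul_zero, add_zero]
    have : κ * (μ[(fun ω => (ξ ω) ^ 2)|F k]) ω ≤ κ * C ^ 2 :=
      mul_le_mul_of_nonneg_left e7 hκ0
    linarith
  have hfinal : 1 + κ * C ^ 2 ≤ Real.exp (c ^ 2 * C ^ 2 * Real.exp (2 * c * C) / 2) := by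
    have heq : c ^ 2 * C ^ 2 * Real.exp (2 * c * C) / 2 = κ * C ^ 2 := by rw [hκ]; ring
    rw [heq]
    have h := Real.add_one_le_exp (κ * C ^ 2)
    linarith
  exact le_trans (le_trans e0 this) hfinal

/-- mgf bound for the partial sums -/
lemma mgf_TT {c : ℝ} (hc : 0 ≤ c) {s : ℕ} (hs : 1 ≤ s) : ∀ n, s ≤ n →
    ∫ ω, Real.exp (-c * TT μ F X s n ω) ∂μ
      ≤ Real.exp ((n - s : ℕ) * (c ^ 2 * C ^ 2 * Real.exp (2 * c * C) / 2)) := by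
  intro n hn
  induction n, hn using Nat.le_induction with
  | base =>
      simp only [TT, Finset.Ico_self, Finset.sum_empty, mul_zero, Nat.sub_self,
        Real.exp_zero, Nat.cast_zero, zero_mul, neg_zero]
      simp [integral_const]
  | succ n hn ih =>
      set q := c ^ 2 * C ^ 2 * Real.exp (2 * c * C) / 2 with hq
      have hq0 : 0 ≤ q := by positivity
      have hn1 : 1 ≤ n := le_trans hs hn
      set f := fun ω => Real.exp (-c * TT μ F X s n ω) with hf
      set g := fun ω => Real.exp (-c * xi μ F X n ω) with hg
      have hTTsucc : ∀ ω, TT μ F X s (n + 1) ω = TT μ F X s n ω + xi μ F X n ω := by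
        intro ω; simp only [TT]; rw [Finset.sum_Ico_succ_top hn]
      have hsplit : (fun ω => Real.exp (-c * TT μ F X s (n + 1) ω)) = fun ω => f ω * g ω := by
        funext ω
        rw [hTTsucc ω, hf, hg, ← Real.exp_add]
        ring_nf
      have hfm : StronglyMeasurable[F n] f :=
        (((TT_sm hadapt s n).measurable.const_mul (-c)).exp).stronglyMeasurable
      have hfm0 : AEStronglyMeasurable f μ := ((hfm.mono (F.le n)).aestronglyMeasurable)
      have hgm0 : AEStronglyMeasurable g μ :=
        (((((xi_sm hadapt n).mono (F.le (n + 1))).measurable.const_mul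
          (-c)).exp).stronglyMeasurable).aestronglyMeasurable
      -- a.e. bounds
      have hTb : ∀ᵐ ω ∂μ, |TT μ F X s n ω| ≤ 2 * C * (n - s : ℕ) := by
        filter_upwards [xi_ae_all hC hadapt hbdd] with ω hall
        calc |TT μ F X s n ω| ≤ ∑ k ∈ Finset.Ico s n, |xi μ F X k ω| :=
              Finset.abs_sum_le_sum_abs _ _
          _ ≤ ∑ _k ∈ Finset.Ico s n, 2 * C := Finset.sum_le_sum fun k hk =>
              hall k (le_trans hs (Finset.mem_Ico.1 hk).1)
          _ = 2 * C * (n - s : ℕ) := by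
              rw [Finset.sum_const, Nat.card_Ico, nsmul_eq_mul, mul_comm]
      have hfb : ∀ᵐ ω ∂μ, ‖f ω‖ ≤ Real.exp (c * (2 * C * (n - s : ℕ))) := by
        filter_upwards [hTb] with ω hb
        rw [Real.norm_eq_abs, hf, abs_of_pos (Real.exp_pos _)]
        apply Real.exp_le_exp.2
        calc -c * TT μ F X s n ω ≤ |(-c) * TT μ F X s n ω| := le_abs_self _
          _ = c * |TT μ F X s n ω| := by rw [abs_mul, abs_neg, abs_of_nonneg hc]
          _ ≤ c * (2 * C * (n - s : ℕ)) := mul_le_mul_of_nonneg_left hb hc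
      have hgb : ∀ᵐ ω ∂μ, ‖g ω‖ ≤ Real.exp (c * (2 * C)) := by
        filter_upwards [xi_ae hC hadapt hbdd hn1] with ω hb
        rw [Real.norm_eq_abs, hg, abs_of_pos (Real.exp_pos _)]
        apply Real.exp_le_exp.2
        calc -c * xi μ F X n ω ≤ |(-c) * xi μ F X n ω| := le_abs_self _
          _ = c * |xi μ F X n ω| := by rw [abs_mul, abs_neg, abs_of_nonneg hc]
          _ ≤ c * (2 * C) := mul_le_mul_of_nonneg_left hb hc
      have hfi : Integrable f μ := by
        refine integrable_of_ae_bdd hfm0 (Real.exp (c * (2 * C * (n - s : ℕ)))) ?_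
        simpa [Real.norm_eq_abs] using hfb
      have hgi : Integrable g μ := by
        refine integrable_of_ae_bdd hgm0 (Real.exp (c * (2 * C))) ?_
        simpa [Real.norm_eq_abs] using hgb
      have hfgi : Integrable (fun ω => f ω * g ω) μ := hgi.bdd_mul hfm0 hfb
      have hpull : μ[fun ω' => f ω' * g ω' | F n] =ᵐ[μ] fun ω => f ω * (μ[g | F n]) ω := by
        simpa [Pi.mul_def] using condExp_mul_of_stronglyMeasurable_left hfm hfgi hgi
      have hcm : ∀ᵐ ω ∂μ, (μ[g | F n]) ω ≤ Real.exp q :=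
        condexp_mgf hC hadapt hbdd hn1 hc
      have hfc : Integrable (fun ω => f ω * (μ[g | F n]) ω) μ :=
        (integrable_condExp (f := g) (m := F n)).bdd_mul hfm0 hfb
      have step1 : ∫ ω, f ω * g ω ∂μ = ∫ ω, (μ[fun ω' => f ω' * g ω' | F n]) ω ∂μ :=
        (integral_condExp (F.le n)).symm
      have step2 : ∫ ω, (μ[fun ω' => f ω' * g ω' | F n]) ω ∂μ
          = ∫ ω, f ω * (μ[g | F n]) ω ∂μ := integral_congr_ae hpull
      have step3 : ∫ ω, f ω * (μ[g | F n]) ω ∂μ ≤ ∫ ω, f ω * Real.exp q ∂μ := by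
        refine integral_mono_ae hfc (hfi.mul_const _) ?_
        filter_upwards [hcm] with ω h
        exact mul_le_mul_of_nonneg_left h (Real.exp_pos _).le
      have step4 : ∫ ω, f ω * Real.exp q ∂μ = (∫ ω, f ω ∂μ) * Real.exp q :=
        integral_mul_const _ _
      rw [hsplit]
      calc ∫ ω, f ω * g ω ∂μ ≤ (∫ ω, f ω ∂μ) * Real.exp q := by
            rw [step1, step2, ← step4]; exact step3
        _ ≤ Real.exp ((n - s : ℕ) * q) * Real.exp q := by
            apply mul_le_mul_of_nonneg_right ih (Real.exp_pos _).le
        _ = Real.exp ((n + 1 - s : ℕ) * q) := by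
            rw [← Real.exp_add]
            congr 1
            have hns : n + 1 - s = (n - s) + 1 := by omega
            rw [hns]
            push_cast
            ring

/-- Chernoff tail bound for the centered partial sums -/
lemma tail_bound {c t : ℝ} (hc : 0 ≤ c) {s n : ℕ} (hs : 1 ≤ s) (hsn : s ≤ n) :
    μ {ω | TT μ F X s n ω ≤ -t}
      ≤ ENNReal.ofReal (Real.exp ((n - s : ℕ)
          * (c ^ 2 * C ^ 2 * Real.exp (2 * c * C) / 2) - c * t)) := by
  set q := c ^ 2 * C ^ 2 * Real.exp (2 * c * C) / 2 with hq
  set f := fun ω => Real.exp (-c * TT μ F X s n ω) with hf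
  have hfm0 : AEStronglyMeasurable f μ :=
    (((((TT_sm hadapt s n).mono (F.le n)).measurable.const_mul
      (-c)).exp).stronglyMeasurable).aestronglyMeasurable
  have hTb : ∀ᵐ ω ∂μ, |TT μ F X s n ω| ≤ 2 * C * (n - s : ℕ) := by
    filter_upwards [xi_ae_all hC hadapt hbdd] with ω hall
    calc |TT μ F X s n ω| ≤ ∑ k ∈ Finset.Ico s n, |xi μ F X k ω| :=
          Finset.abs_sum_le_sum_abs _ _
      _ ≤ ∑ _k ∈ Finset.Ico s n, 2 * C := Finset.sum_le_sum fun k hk =>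
          hall k (le_trans hs (Finset.mem_Ico.1 hk).1)
      _ = 2 * C * (n - s : ℕ) := by
          rw [Finset.sum_const, Nat.card_Ico, nsmul_eq_mul, mul_comm]
  have hfi : Integrable f μ := by
    refine integrable_of_ae_bdd hfm0 (Real.exp (c * (2 * C * (n - s : ℕ)))) ?_
    filter_upwards [hTb] with ω hb
    rw [hf, abs_of_pos (Real.exp_pos _)]
    apply Real.exp_le_exp.2
    calc -c * TT μ F X s n ω ≤ |(-c) * TT μ F X s n ω| := le_abs_self _
      _ = c * |TT μ F X s n ω| := by rw [abs_mul, abs_neg, abs_of_nonneg hc]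
      _ ≤ c * (2 * C * (n - s : ℕ)) := mul_le_mul_of_nonneg_left hb hc
  have hsub : {ω | TT μ F X s n ω ≤ -t} ⊆ {ω | Real.exp (c * t) ≤ f ω} := by
    intro ω h
    simp only [Set.mem_setOf_eq] at *
    apply Real.exp_le_exp.2
    nlinarith [mul_le_mul_of_nonneg_left h hc]
  have hμ := mul_meas_ge_le_integral_of_nonneg (μ := μ) (f := f)
    (Eventually.of_forall fun ω => (Real.exp_pos _).le) hfi (Real.exp (c * t))
  have h2 : ∫ ω, f ω ∂μ ≤ Real.exp ((n - s : ℕ) * q) :=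
    mgf_TT hC hadapt hbdd hc hs n hsn
  have h3 : (μ {ω | Real.exp (c * t) ≤ f ω}).toReal
      ≤ Real.exp ((n - s : ℕ) * q - c * t) := by
    have hpos : (0:ℝ) < Real.exp (c * t) := Real.exp_pos _
    rw [Real.exp_sub]
    calc (μ {ω | Real.exp (c * t) ≤ f ω}).toReal
        ≤ (∫ ω, f ω ∂μ) / Real.exp (c * t) := (le_div_iff₀' hpos).mpr hμ
      _ ≤ Real.exp ((n - s : ℕ) * q) / Real.exp (c * t) := by
          apply div_le_div_of_nonneg_right h2 hpos.le
  calc μ {ω | TT μ F X s n ω ≤ -t} ≤ μ {ω | Real.exp (c * t) ≤ f ω} := measure_mono hsub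
    _ = ENNReal.ofReal (μ {ω | Real.exp (c * t) ≤ f ω}).toReal :=
        (ENNReal.ofReal_toReal (measure_ne_top μ _)).symm
    _ ≤ ENNReal.ofReal (Real.exp ((n - s : ℕ) * q - c * t)) := ENNReal.ofReal_le_ofReal h3

/-- union bound over the possible last crossing times -/
lemma bad_bound {c t : ℝ} (hc : 0 ≤ c) (n : ℕ) :
    μ {ω | ∃ s ∈ Finset.Icc 1 n, TT μ F X s n ω ≤ -t}
      ≤ n * ENNReal.ofReal (Real.exp ((n : ℝ)
          * (c ^ 2 * C ^ 2 * Real.exp (2 * c * C) / 2) - c * t)) := by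
  set q := c ^ 2 * C ^ 2 * Real.exp (2 * c * C) / 2 with hq
  have hq0 : 0 ≤ q := by positivity
  have hset : {ω | ∃ s ∈ Finset.Icc 1 n, TT μ F X s n ω ≤ -t}
      = ⋃ s ∈ Finset.Icc 1 n, {ω | TT μ F X s n ω ≤ -t} := by
    ext ω; simp
  rw [hset]
  refine le_trans (measure_biUnion_finset_le _ _) ?_
  calc ∑ s ∈ Finset.Icc 1 n, μ {ω | TT μ F X s n ω ≤ -t}
      ≤ ∑ _s ∈ Finset.Icc 1 n, ENNReal.ofReal (Real.exp ((n : ℝ) * q - c * t)) := by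
        apply Finset.sum_le_sum
        intro s hsIcc
        obtain ⟨h1, h2⟩ := Finset.mem_Icc.1 hsIcc
        refine le_trans (tail_bound hC hadapt hbdd hc h1 h2) (ENNReal.ofReal_le_ofReal ?_)
        apply Real.exp_le_exp.2
        have hcast : ((n - s : ℕ) : ℝ) ≤ (n : ℝ) := Nat.cast_le.2 (Nat.sub_le n s)
        have := mul_le_mul_of_nonneg_right hcast hq0
        rw [← hq]
        linarith
    _ = n * ENNReal.ofReal (Real.exp ((n : ℝ) * q - c * t)) := by
        rw [Finset.sum_const, Nat.card_Icc]
        simp [nsmul_eq_mul]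

end bounds


/-- Deterministic lemma: last-crossing-time decomposition. -/
lemma pathwise {x D T : ℕ → ℝ} {C ε J t : ℝ} (hε : 0 < ε) (hJ : 0 < J) (hC : 0 < C)
    (ht : 0 ≤ t) {n : ℕ} (hn : 1 ≤ n)
    (hx1 : 0 ≤ x 1)
    (hdC : ∀ k, 1 ≤ k → -C ≤ x (k + 1) - x k)
    (hdrift : ∀ k, 1 ≤ k → x k < J * k → ε ≤ D k)
    (hid : ∀ s, 1 ≤ s → s ≤ n → x n = x s + (∑ k ∈ Finset.Ico s n, D k) + T s)
    (hT : ∀ s, 1 ≤ s → s ≤ n → -t ≤ T s) :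
    min J ε * n - ((min J ε + C) + t) ≤ x n := by
  set a := min J ε with ha
  have haJ : a ≤ J := min_le_left _ _
  have haε : a ≤ ε := min_le_right _ _
  have ha0 : 0 < a := lt_min hJ hε
  set Λ := (Finset.Icc 1 n).filter (fun k => J * k ≤ x k) with hΛ
  by_cases hmem : n ∈ Λ
  · have h1 : J * n ≤ x n := (Finset.mem_filter.1 hmem).2
    have h2 : a * n ≤ J * n := mul_le_mul_of_nonneg_right haJ (Nat.cast_nonneg n)
    linarith
  rcases Finset.eq_empty_or_nonempty Λ with hemp | hne
  · -- no crossing: drift from time 1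
    have hkey : ∀ k ∈ Finset.Ico 1 n, ε ≤ D k := by
      intro k hk
      obtain ⟨hk1, hk2⟩ := Finset.mem_Ico.1 hk
      have hnot : k ∉ Λ := by rw [hemp]; simp
      have hklt : x k < J * k := by
        by_contra h
        exact hnot (Finset.mem_filter.2 ⟨Finset.mem_Icc.2 ⟨hk1, hk2.le⟩, not_lt.1 h⟩)
      exact hdrift k hk1 hklt
    have hsum : ((n - 1 : ℕ) : ℝ) * ε ≤ ∑ k ∈ Finset.Ico 1 n, D k := by
      have := Finset.card_nsmul_le_sum (Finset.Ico 1 n) D ε hkey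
      rwa [Nat.card_Ico, nsmul_eq_mul] at this
    have hid1 := hid 1 le_rfl hn
    have hT1 := hT 1 le_rfl hn
    have hcast : ((n - 1 : ℕ) : ℝ) = (n : ℝ) - 1 := by
      rw [Nat.cast_sub hn]; simp
    rw [hcast] at hsum
    have hεn : a * ((n : ℝ) - 1) ≤ ε * ((n : ℝ) - 1) := by
      apply mul_le_mul_of_nonneg_right haε
      have : (1 : ℝ) ≤ (n : ℝ) := by exact_mod_cast hn
      linarith
    nlinarith
  · -- last crossing at m < n
    set m := Λ.max' hne with hm
    have hmΛ : m ∈ Λ := Λ.max'_mem hne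
    obtain ⟨hmIcc, hmX⟩ := Finset.mem_filter.1 hmΛ
    obtain ⟨hm1, hmn⟩ := Finset.mem_Icc.1 hmIcc
    have hmltn : m < n := lt_of_le_of_ne hmn (fun h => hmem (h ▸ hmΛ))
    have hsn : m + 1 ≤ n := hmltn
    have hkey : ∀ k ∈ Finset.Ico (m + 1) n, ε ≤ D k := by
      intro k hk
      obtain ⟨hk1, hk2⟩ := Finset.mem_Ico.1 hk
      have hknot : k ∉ Λ := fun hkΛ => absurd (Λ.le_max' k hkΛ) (by omega)
      have hklt : x k < J * k := by
        by_contra h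
        exact hknot (Finset.mem_filter.2 ⟨Finset.mem_Icc.2 ⟨by omega, hk2.le⟩, not_lt.1 h⟩)
      exact hdrift k (by omega) hklt
    have hsum : ((n - (m + 1) : ℕ) : ℝ) * ε ≤ ∑ k ∈ Finset.Ico (m + 1) n, D k := by
      have := Finset.card_nsmul_le_sum (Finset.Ico (m + 1) n) D ε hkey
      rwa [Nat.card_Ico, nsmul_eq_mul] at this
    have hid' := hid (m + 1) (by omega) hsn
    have hT' := hT (m + 1) (by omega) hsn
    have hstep : x m - C ≤ x (m + 1) := by
      have := hdC m hm1
      linarith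
    have hcast : ((n - (m + 1) : ℕ) : ℝ) = (n : ℝ) - (m : ℝ) - 1 := by
      rw [Nat.cast_sub hsn]; push_cast; ring
    rw [hcast] at hsum
    have hJm : a * m ≤ J * m := mul_le_mul_of_nonneg_right haJ (Nat.cast_nonneg m)
    have hmr : (m : ℝ) + 1 ≤ (n : ℝ) := by exact_mod_cast hsn
    have hεm : a * ((n : ℝ) - m - 1) ≤ ε * ((n : ℝ) - m - 1) := by
      apply mul_le_mul_of_nonneg_right haε
      linarith
    nlinarith


noncomputable def lamf (C : ℝ) (n : ℕ) : ℝ := Real.sqrt (5 * Real.log n / n) / C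

noncomputable def rf (C : ℝ) (n : ℕ) : ℝ := Real.sqrt (5 * C ^ 2 * n * Real.log n)

lemma lamf_nonneg {C : ℝ} (hC : 0 < C) (n : ℕ) : 0 ≤ lamf C n :=
  div_nonneg (Real.sqrt_nonneg _) hC.le

lemma tendsto_logdiv : Tendsto (fun n : ℕ => Real.log n / n) atTop (nhds 0) :=
  (Real.isLittleO_log_id_atTop.tendsto_div_nhds_zero).comp tendsto_natCast_atTop_atTop

lemma tendsto_lamf {C : ℝ} (hC : 0 < C) : Tendsto (fun n : ℕ => lamf C n) atTop (nhds 0) := by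
  have h1 : Tendsto (fun n : ℕ => 5 * Real.log n / n) atTop (nhds 0) := by
    have := tendsto_logdiv.const_mul (5 : ℝ)
    simpa [mul_div_assoc] using this
  have h2 : Tendsto (fun n : ℕ => Real.sqrt (5 * Real.log n / n)) atTop (nhds 0) := by
    have := (Real.continuous_sqrt.tendsto 0).comp h1
    simpa only [Function.comp_def, Real.sqrt_zero] using this
  simpa [lamf] using h2.div_const C

lemma lamf_sq {C : ℝ} (hC : 0 < C) {n : ℕ} (hn : 1 ≤ n) :
    lamf C n ^ 2 * C ^ 2 = 5 * Real.log n / n := by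
  have hlog : 0 ≤ Real.log n := Real.log_nonneg (by exact_mod_cast hn)
  have hn0 : 0 < (n : ℝ) := by exact_mod_cast hn
  rw [lamf, div_pow, Real.sq_sqrt (by positivity)]
  field_simp

lemma lamf_mul_rf {C : ℝ} (hC : 0 < C) {n : ℕ} (hn : 1 ≤ n) :
    lamf C n * rf C n = 5 * Real.log n := by
  have hlog : 0 ≤ Real.log n := Real.log_nonneg (by exact_mod_cast hn)
  have hn0 : 0 < (n : ℝ) := by exact_mod_cast hn
  rw [lamf, rf, div_mul_eq_mul_div, ← Real.sqrt_mul (by positivity)]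
  have heq : 5 * Real.log n / n * (5 * C ^ 2 * n * Real.log n) = (5 * C * Real.log n) ^ 2 := by
    field_simp
  rw [heq, Real.sqrt_sq (by positivity)]
  field_simp

lemma exponent_bound {C A : ℝ} (hC : 0 < C) (hA : 0 < A) :
    ∀ᶠ n : ℕ in atTop,
      (n : ℝ) * (lamf C n ^ 2 * C ^ 2 * Real.exp (2 * lamf C n * C) / 2)
          - lamf C n * (rf C n - A)
        ≤ -(9 / 4) * Real.log n := by
  have hexp : Tendsto (fun n : ℕ => Real.exp (2 * lamf C n * C)) atTop (nhds 1) := by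
    have h1 : Tendsto (fun n : ℕ => 2 * lamf C n * C) atTop (nhds 0) := by
      have := ((tendsto_lamf hC).const_mul (2 : ℝ)).mul_const C
      simpa using this
    have := (Real.continuous_exp.tendsto 0).comp h1
    simpa [Function.comp_def] using this
  have hev1 : ∀ᶠ n : ℕ in atTop, Real.exp (2 * lamf C n * C) ≤ 21 / 20 :=
    hexp.eventually_le_const (by norm_num)
  have hev2 : ∀ᶠ n : ℕ in atTop, lamf C n * A ≤ 1 / 8 := by
    have h1 : Tendsto (fun n : ℕ => lamf C n * A) atTop (nhds 0) := by
      simpa using (tendsto_lamf hC).mul_const A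
    exact h1.eventually_le_const (by norm_num)
  have hev3 : ∀ᶠ n : ℕ in atTop, (1 : ℝ) ≤ Real.log n := by
    have : Tendsto (fun n : ℕ => Real.log n) atTop atTop :=
      Real.tendsto_log_atTop.comp tendsto_natCast_atTop_atTop
    exact this.eventually_ge_atTop 1
  filter_upwards [hev1, hev2, hev3, eventually_ge_atTop 2] with n h1 h2 h3 hn2
  have hn1 : 1 ≤ n := by omega
  have hn0 : 0 < (n : ℝ) := by exact_mod_cast hn1
  have hlog : 0 ≤ Real.log n := by linarith
  have e1 : (n : ℝ) * (lamf C n ^ 2 * C ^ 2 * Real.exp (2 * lamf C n * C) / 2)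
      = 5 * Real.log n * Real.exp (2 * lamf C n * C) / 2 := by
    rw [lamf_sq hC hn1]
    field_simp
  have e2 : lamf C n * (rf C n - A) = 5 * Real.log n - lamf C n * A := by
    rw [mul_sub, lamf_mul_rf hC hn1]
  rw [e1, e2]
  have h4' := mul_le_mul_of_nonneg_left h1
    (by positivity : (0:ℝ) ≤ 5 * Real.log (n:ℝ))
  have h4 : 5 * Real.log n * Real.exp (2 * lamf C n * C) / 2
      ≤ 5 * Real.log n * (21 / 20) / 2 := by linarith
  have h5 : lamf C n * A ≤ 1 / 8 * Real.log n := by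
    calc lamf C n * A ≤ 1 / 8 := h2
      _ ≤ 1 / 8 * Real.log n := by linarith
  linarith

lemma tendsto_rf_div {C : ℝ} (hC : 0 < C) :
    Filter.Tendsto (fun n : ℕ => rf C n / n) atTop (nhds 0) := by
  have hEq : ∀ᶠ n : ℕ in atTop, Real.sqrt (5 * C ^ 2 * (Real.log n / n)) = rf C n / n := by
    filter_upwards [eventually_ge_atTop 1] with n hn
    have hn0 : 0 < (n : ℝ) := by exact_mod_cast hn
    have hlog : 0 ≤ Real.log n := Real.log_nonneg (by exact_mod_cast hn)
    rw [rf, show 5 * C ^ 2 * (n : ℝ) * Real.log n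
        = (5 * C ^ 2 * (Real.log n / n)) * (n : ℝ) ^ 2 by field_simp,
      Real.sqrt_mul (by positivity) ((n : ℝ) ^ 2), Real.sqrt_sq hn0.le]
    field_simp
  have h1 : Tendsto (fun n : ℕ => 5 * C ^ 2 * (Real.log n / n)) atTop (nhds 0) := by
    simpa using tendsto_logdiv.const_mul (5 * C ^ 2)
  have h2 := (Real.continuous_sqrt.tendsto 0).comp h1
  simp only [Function.comp_def, Real.sqrt_zero] at h2
  exact h2.congr' hEq

lemma summable_b : Summable (fun n : ℕ => (n : ℝ) * Real.exp (-(9 / 4) * Real.log n)) := by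
  have hs : Summable (fun n : ℕ => 1 / (n : ℝ) ^ ((5:ℝ) / 4)) :=
    Real.summable_one_div_nat_rpow.2 (by norm_num)
  apply hs.congr
  intro n
  rcases Nat.eq_zero_or_pos n with h0 | hpos
  · subst h0
    simp [Real.zero_rpow (by norm_num : ((5:ℝ)/4) ≠ 0)]
  · have hn0 : 0 < (n : ℝ) := by exact_mod_cast hpos
    rw [Real.rpow_def_of_pos hn0]
    rw [one_div, ← Real.exp_neg]
    have : (n : ℝ) * Real.exp (-(9 / 4) * Real.log n)
        = Real.exp (Real.log n) * Real.exp (-(9 / 4) * Real.log n) := by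
      rw [Real.exp_log hn0]
    rw [this, ← Real.exp_add]
    congr 1
    ring


section decomp
variable {Ω : Type*} {m0 : MeasurableSpace Ω} {μ : Measure Ω}
  {F : Filtration ℕ m0} {X : ℕ → Ω → ℝ}

lemma decomp (ω : Ω) {s n : ℕ} (h : s ≤ n) :
    X n ω = X s ω + (∑ k ∈ Finset.Ico s n, DD μ F X k ω) + TT μ F X s n ω := by
  have ht : TT μ F X s n ω
      = (∑ k ∈ Finset.Ico s n, dd X k ω) - ∑ k ∈ Finset.Ico s n, DD μ F X k ω := by
    simp only [TT, xi, Finset.sum_sub_distrib]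
  have htel : ∑ k ∈ Finset.Ico s n, dd X k ω = X n ω - X s ω := by
    simp only [dd]
    rw [Finset.sum_Ico_eq_sub _ h, Finset.sum_range_sub (fun k => X k ω),
      Finset.sum_range_sub (fun k => X k ω)]
    ring
  rw [ht, htel]; ring

end decomp

end PDrift


/-- Linear growth of a process with positive drift below a linear
barrier: if an adapted process starts nonnegative, has increments bounded by `C`, and has
conditional drift at least `ε` whenever `X n < J·n`, then almost surely
`X n ≥ min{J, ε}·n − √(5·C²·n·log n)` for all sufficiently large `n`; in particular,
almost surely `liminf X n/n ≥ min{J, ε} > 0`. -/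
theorem positive_drift_process_linear_growth
    {Ω : Type*} {m0 : MeasurableSpace Ω} (μ : Measure Ω) [IsProbabilityMeasure μ]
    (F : Filtration ℕ m0) (X : ℕ → Ω → ℝ) (hadapt : Adapted F X)
    (ε J C : ℝ) (hε : 0 < ε) (hJ : 0 < J) (hC : 0 < C)
    (hstart : ∀ᵐ ω ∂μ, 0 ≤ X 1 ω)
    (hbdd : ∀ n : ℕ, 1 ≤ n → ∀ᵐ ω ∂μ, |X (n + 1) ω - X n ω| ≤ C)
    (hdrift : ∀ n : ℕ, 1 ≤ n → ∀ᵐ ω ∂μ,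
      X n ω < J * n → ε ≤ (μ[(fun ω' => X (n + 1) ω' - X n ω') | F n]) ω) :
    (∀ᵐ ω ∂μ, ∀ᶠ n : ℕ in atTop,
      min J ε * n - Real.sqrt (5 * C ^ 2 * n * Real.log n) ≤ X n ω) ∧
    (∀ᵐ ω ∂μ, min J ε ≤ liminf (fun n : ℕ => X n ω / n) atTop) := by
  classical
  have ha0 : 0 < min J ε := lt_min hJ hε
  have haC : 0 < min J ε + C := by linarith
  -- aggregated a.e. hypotheses
  have hbdd' : ∀ᵐ ω ∂μ, ∀ k : ℕ, 1 ≤ k → |X (k + 1) ω - X k ω| ≤ C := by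
    rw [ae_all_iff]
    intro k
    rcases Nat.lt_or_ge k 1 with hk | hk
    · exact Filter.Eventually.of_forall fun ω h => absurd h (by omega)
    · filter_upwards [hbdd k hk] with ω h _; exact h
  have hdrift' : ∀ᵐ ω ∂μ, ∀ k : ℕ, 1 ≤ k → X k ω < J * k → ε ≤ PDrift.DD μ F X k ω := by
    rw [ae_all_iff]
    intro k
    rcases Nat.lt_or_ge k 1 with hk | hk
    · exact Filter.Eventually.of_forall fun ω h => absurd h (by omega)
    · filter_upwards [hdrift k hk] with ω h _; exact h
  -- the bad events
  set bad : ℕ → Set Ω := fun n => {ω | ∃ s ∈ Finset.Icc 1 n,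
    PDrift.TT μ F X s n ω ≤ -(PDrift.rf C n - (min J ε + C))} with hbad
  -- eventual bound on the measure of the bad events
  have hmeas : ∀ᶠ n : ℕ in atTop,
      μ (bad n) ≤ ENNReal.ofReal ((n : ℝ) * Real.exp (-(9 / 4) * Real.log n)) := by
    filter_upwards [PDrift.exponent_bound hC haC] with n hn
    have h1 := PDrift.bad_bound hC hadapt hbdd (c := PDrift.lamf C n)
      (t := PDrift.rf C n - (min J ε + C)) (PDrift.lamf_nonneg hC n) n
    calc μ (bad n) ≤ (n : ENNReal) * ENNReal.ofReal (Real.exp ((n : ℝ)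
          * (PDrift.lamf C n ^ 2 * C ^ 2 * Real.exp (2 * PDrift.lamf C n * C) / 2)
          - PDrift.lamf C n * (PDrift.rf C n - (min J ε + C)))) := by
          rw [hbad]; exact h1
      _ = ENNReal.ofReal ((n : ℝ) * Real.exp ((n : ℝ)
          * (PDrift.lamf C n ^ 2 * C ^ 2 * Real.exp (2 * PDrift.lamf C n * C) / 2)
          - PDrift.lamf C n * (PDrift.rf C n - (min J ε + C)))) := by
          rw [ENNReal.ofReal_mul (Nat.cast_nonneg n), ENNReal.ofReal_natCast]
      _ ≤ ENNReal.ofReal ((n : ℝ) * Real.exp (-(9 / 4) * Real.log n)) := by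
          apply ENNReal.ofReal_le_ofReal
          exact mul_le_mul_of_nonneg_left (Real.exp_le_exp.2 hn) (Nat.cast_nonneg n)
  obtain ⟨N, hN⟩ := eventually_atTop.1 hmeas
  -- Borel–Cantelli
  have hsum : (∑' k : ℕ, μ (bad (k + N))) ≠ ⊤ := by
    have hsum2 : Summable (fun k : ℕ => ((k + N : ℕ) : ℝ)
        * Real.exp (-(9 / 4) * Real.log ((k + N : ℕ) : ℝ))) :=
      (summable_nat_add_iff N).2 PDrift.summable_b
    have hle : (∑' k : ℕ, μ (bad (k + N)))
        ≤ ∑' k : ℕ, ENNReal.ofReal (((k + N : ℕ) : ℝ)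
            * Real.exp (-(9 / 4) * Real.log ((k + N : ℕ) : ℝ))) :=
      ENNReal.tsum_le_tsum fun k => hN (k + N) (Nat.le_add_left _ _)
    have heq : (∑' k : ℕ, ENNReal.ofReal (((k + N : ℕ) : ℝ)
        * Real.exp (-(9 / 4) * Real.log ((k + N : ℕ) : ℝ))))
        = ENNReal.ofReal (∑' k : ℕ, ((k + N : ℕ) : ℝ)
            * Real.exp (-(9 / 4) * Real.log ((k + N : ℕ) : ℝ))) :=
      (ENNReal.ofReal_tsum_of_nonneg (fun k => by positivity) hsum2).symm
    rw [heq] at hle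
    exact ne_top_of_le_ne_top ENNReal.ofReal_ne_top hle
  have hBC : ∀ᵐ ω ∂μ, ∀ᶠ k : ℕ in atTop, ω ∉ bad (k + N) :=
    ae_eventually_notMem hsum
  -- eventual positivity of the deviation term
  have hrfev : ∀ᶠ n : ℕ in atTop, min J ε + C ≤ PDrift.rf C n := by
    have h1 : Tendsto (fun n : ℕ => (5 * C ^ 2) * (n : ℝ)) atTop atTop :=
      Tendsto.const_mul_atTop (by positivity) tendsto_natCast_atTop_atTop
    have h2 : Tendsto (fun n : ℕ => Real.log n) atTop atTop :=
      Real.tendsto_log_atTop.comp tendsto_natCast_atTop_atTop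
    have htend : Tendsto (fun n : ℕ => 5 * C ^ 2 * (n : ℝ) * Real.log n) atTop atTop := by
      have := h1.atTop_mul_atTop₀ h2
      simpa [mul_assoc] using this
    filter_upwards [htend.eventually_ge_atTop ((min J ε + C) ^ 2)] with n hn
    exact Real.le_sqrt_of_sq_le hn
  obtain ⟨M, hM⟩ := eventually_atTop.1 hrfev
  -- first conclusion
  have main1 : ∀ᵐ ω ∂μ, ∀ᶠ n : ℕ in atTop,
      min J ε * n - Real.sqrt (5 * C ^ 2 * n * Real.log n) ≤ X n ω := by
    filter_upwards [hstart, hbdd', hdrift', hBC] with ω h1 h2 h3 h4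
    obtain ⟨K, hK⟩ := eventually_atTop.1 h4
    rw [eventually_atTop]
    refine ⟨max (K + N) (max M 1), fun n hn => ?_⟩
    have hn1 : 1 ≤ n := le_trans (le_trans (le_max_right M 1) (le_max_right _ _)) hn
    have hnM : M ≤ n := le_trans (le_trans (le_max_left M 1) (le_max_right _ _)) hn
    have hnKN : K + N ≤ n := le_trans (le_max_left _ _) hn
    have hnot : ω ∉ bad n := by
      have heqn : n = (n - N) + N := by omega
      rw [heqn]
      exact hK (n - N) (by omega)
    have ht0 : 0 ≤ PDrift.rf C n - (min J ε + C) := by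
      have := hM n hnM; linarith
    have hpath := PDrift.pathwise (x := fun k => X k ω)
      (D := fun k => PDrift.DD μ F X k ω) (T := fun s => PDrift.TT μ F X s n ω)
      (t := PDrift.rf C n - (min J ε + C)) hε hJ hC ht0 hn1 h1
      (fun k hk => by have := abs_le.1 (h2 k hk); linarith [(abs_le.1 (h2 k hk)).1])
      (fun k hk hlt => h3 k hk hlt)
      (fun s hs1 hsn => PDrift.decomp ω hsn)
      (fun s hs1 hsn => by
        by_contra hcon
        exact hnot ⟨s, Finset.mem_Icc.2 ⟨hs1, hsn⟩, by push_neg at hcon; linarith⟩)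
    have hfin : min J ε * n - ((min J ε + C) + (PDrift.rf C n - (min J ε + C))) ≤ X n ω := hpath
    have : (min J ε + C) + (PDrift.rf C n - (min J ε + C)) = PDrift.rf C n := by ring
    rw [this] at hfin
    exact hfin
  refine ⟨main1, ?_⟩
  -- second conclusion
  have htd : Tendsto (fun n : ℕ => PDrift.rf C n / n) atTop (nhds 0) := PDrift.tendsto_rf_div hC
  filter_upwards [main1, hbdd', hstart] with ω h1 h2 hx1
  -- upper bound on X n / n
  have hub : ∀ᶠ n : ℕ in atTop, X n ω / n ≤ |X 1 ω| + C := by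
    rw [eventually_atTop]
    refine ⟨1, fun n hn => ?_⟩
    have hgrow : ∀ m : ℕ, 1 ≤ m → X m ω ≤ X 1 ω + C * ((m : ℝ) - 1) := by
      intro m hm
      induction m, hm using Nat.le_induction with
      | base => simp
      | succ m hm ih =>
          have hd := (abs_le.1 (h2 m hm)).2
          push_cast
          have : (m : ℝ) - 1 ≥ 0 := by
            have : (1 : ℝ) ≤ (m : ℝ) := by exact_mod_cast hm
            linarith
          linarith
    have hn0 : 0 < (n : ℝ) := by exact_mod_cast hn
    rw [div_le_iff₀ hn0]
    have hx := hgrow n hn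
    have h1n : (1 : ℝ) ≤ (n : ℝ) := by exact_mod_cast hn
    have hXle : X 1 ω ≤ |X 1 ω| := le_abs_self _
    have habs : 0 ≤ |X 1 ω| := abs_nonneg _
    nlinarith
  -- lower bound on X n / n
  have hlb : ∀ᶠ n : ℕ in atTop, min J ε - PDrift.rf C n / n ≤ X n ω / n := by
    filter_upwards [h1, eventually_ge_atTop 1] with n hXn hn1
    have hn0 : 0 < (n : ℝ) := by exact_mod_cast hn1
    have hXn' : min J ε * n - PDrift.rf C n ≤ X n ω := hXn
    have key : (min J ε * n - PDrift.rf C n) / n ≤ X n ω / n :=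
      div_le_div_of_nonneg_right hXn' hn0.le
    have heq2 : (min J ε * n - PDrift.rf C n) / n = min J ε - PDrift.rf C n / n := by
      field_simp
    rw [heq2] at key
    exact key
  have hlim2 : Tendsto (fun n : ℕ => min J ε - PDrift.rf C n / n) atTop (nhds (min J ε)) := by
    simpa using tendsto_const_nhds.sub htd
  calc min J ε = liminf (fun n : ℕ => min J ε - PDrift.rf C n / n) atTop :=
        hlim2.liminf_eq.symm
    _ ≤ liminf (fun n : ℕ => X n ω / n) atTop := by
        refine Filter.liminf_le_liminf hlb ?_ ?_
        · refine Filter.isBoundedUnder_of_eventually_ge (a := min J ε - 1) ?_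
          filter_upwards [htd.eventually_le_const (by norm_num : (0:ℝ) < 1)] with n h
          linarith
        · exact Filter.isCoboundedUnder_ge_of_eventually_le atTop hub
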